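/- Let P and Q be probability measures on a measurable space (Ω, 𝒜), both absolutely continuous with respect to a σ-finite measure ν, with densities p and q. Let α > 1 and ε' ∈ ℝ satisfy ∫ p(t)^α q(t)^{1−α} dν(t) ≤ exp((α − 1) ε') (i.e. the Rényi divergence of order α from P to Q is at most ε'). Then for every ε ≥ 0, the hockey-stick divergence satisfies ∫ [p(t) − e^ε q(t)]_+ dν(t) ≤ (exp((α − 1)(ε' − ε)) / α) · (1 − 1/α)^{α − 1}. -/

import Mathlib

open MeasureTheory

private lemma young_aux {α : ℝ} (hα : 1 < α) {u : ℝ} (hu : 0 ≤ u) :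
    u ≤ u ^ α / α + (α - 1) / α := by
  have hα0 : (0:ℝ) < α := lt_trans one_pos hα
  have hα1 : (0:ℝ) < α - 1 := by linarith
  have hpq : Real.HolderConjugate α (α / (α - 1)) := by
    rw [Real.holderConjugate_iff]; constructor
    · exact hα
    · field_simp; ring
  have h := Real.young_inequality_of_nonneg hu (zero_le_one) hpq
  rw [Real.one_rpow, mul_one] at h
  have : (1:ℝ) / (α / (α - 1)) = (α - 1) / α := by field_simp
  calc u ≤ u ^ α / α + 1 / (α / (α - 1)) := by
        simpa [one_div] using h
    _ = u ^ α / α + (α - 1) / α := by rw [this]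

private lemma key_r {α β : ℝ} (hα : 1 < α) (hβ : 0 < β) {r : ℝ} (hr : 0 ≤ r) :
    r - β ≤ ((α - 1) / (α * β)) ^ (α - 1) / α * r ^ α := by
  have hα0 : (0:ℝ) < α := lt_trans one_pos hα
  have hα1 : (0:ℝ) < α - 1 := by linarith
  set s : ℝ := (α - 1) / (α * β) with hs_def
  have hs : 0 < s := div_pos hα1 (mul_pos hα0 hβ)
  have hy := young_aux hα (mul_nonneg hr hs.le)
  have hmul : (r * s) ^ α = r ^ α * (s * s ^ (α - 1)) := by
    rw [Real.mul_rpow hr hs.le]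
    congr 1
    have hsplit : s ^ α = s ^ (1 + (α - 1)) := by norm_num
    rw [hsplit, Real.rpow_add hs, Real.rpow_one]
  have hβs : (α - 1) / α = β * s := by
    rw [hs_def]; field_simp
  rw [hmul, hβs] at hy
  -- hy : r * s ≤ r ^ α * (s * s ^ (α - 1)) / α + β * s
  have h' : s * (r - β) ≤ s * (((α - 1) / (α * β)) ^ (α - 1) / α * r ^ α) := by
    have e1 : s * (r - β) = r * s - β * s := by ring
    have e2 : s * (s ^ (α - 1) / α * r ^ α) = r ^ α * (s * s ^ (α - 1)) / α := by ring
    rw [hs_def] at e2 ⊢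
    linarith [hy, e2]
  exact le_of_mul_le_mul_left h' hs

private lemma key_xy {α β : ℝ} (hα : 1 < α) (hβ : 0 < β) {x y : ℝ} (hx : 0 ≤ x)
    (hy : 0 < y) :
    x - β * y ≤ ((α - 1) / (α * β)) ^ (α - 1) / α * (x ^ α * y ^ (1 - α)) := by
  have hr : 0 ≤ x / y := div_nonneg hx hy.le
  have h := key_r hα hβ hr
  have h2 := mul_le_mul_of_nonneg_right h hy.le
  have hxy : (x / y - β) * y = x - β * y := by field_simp
  have hpow : (x / y) ^ α * y = x ^ α * y ^ (1 - α) := by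
    rw [Real.div_rpow hx hy.le, Real.rpow_sub hy, Real.rpow_one]
    field_simp
  calc x - β * y = (x / y - β) * y := hxy.symm
    _ ≤ ((α - 1) / (α * β)) ^ (α - 1) / α * (x / y) ^ α * y := h2
    _ = ((α - 1) / (α * β)) ^ (α - 1) / α * (x ^ α * y ^ (1 - α)) := by
        rw [mul_assoc, hpow]

/-- Conversion of a Rényi divergence bound of order `α > 1` into a hockey-stick
(i.e. `(ε, δ)`-DP) bound: if `∫ p^α q^(1-α) dν ≤ exp((α-1)ε')` then for every `ε ≥ 0`,
`∫ [p - e^ε q]₊ dν ≤ exp((α-1)(ε'-ε))/α * (1 - 1/α)^(α-1)`. -/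
theorem stmt_10 {Ω : Type*} [MeasurableSpace Ω] (ν : Measure Ω) [SigmaFinite ν]
    (p q : Ω → ℝ) (hp : Measurable p) (hq : Measurable q)
    (hp0 : ∀ t, 0 ≤ p t) (hq0 : ∀ t, 0 ≤ q t)
    (hpi : Integrable p ν) (hqi : Integrable q ν)
    (hp1 : ∫ t, p t ∂ν = 1) (hq1 : ∫ t, q t ∂ν = 1)
    (α ε' : ℝ) (hα : 1 < α)
    (hren : ∫⁻ t, ENNReal.ofReal (p t) ^ α * ENNReal.ofReal (q t) ^ (1 - α) ∂ν ≤
      ENNReal.ofReal (Real.exp ((α - 1) * ε')))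
    (ε : ℝ) (hε : 0 ≤ ε) :
    ∫ t, max 0 (p t - Real.exp ε * q t) ∂ν ≤
      Real.exp ((α - 1) * (ε' - ε)) / α * (1 - 1 / α) ^ (α - 1) := by
  have hα0 : (0:ℝ) < α := lt_trans one_pos hα
  have hα1 : (0:ℝ) < α - 1 := by linarith
  set β : ℝ := Real.exp ε with hβ_def
  have hβ : 0 < β := Real.exp_pos ε
  set K : ℝ := ((α - 1) / (α * β)) ^ (α - 1) / α with hK_def
  have hK0 : 0 < K := div_pos (Real.rpow_pos_of_pos
    (div_pos hα1 (mul_pos hα0 hβ)) _) hα0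
  set E : ℝ := Real.exp ((α - 1) * ε') with hE_def
  have hE0 : 0 < E := Real.exp_pos _
  -- the function
  set f : Ω → ℝ := fun t => max 0 (p t - β * q t) with hf_def
  have hfm : Measurable f := measurable_const.max (hp.sub (measurable_const.mul hq))
  have hf0 : ∀ t, 0 ≤ f t := fun t => le_max_left _ _
  -- pointwise bound in ℝ≥0∞
  have hpt : ∀ t, ENNReal.ofReal (f t) ≤
      ENNReal.ofReal K * (ENNReal.ofReal (p t) ^ α * ENNReal.ofReal (q t) ^ (1 - α)) := by
    intro t
    rcases lt_or_eq_of_le (hq0 t) with hqt | hqt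
    · -- q t > 0
      have hkey := key_xy hα hβ (hp0 t) hqt
      have hfb : f t ≤ K * (p t ^ α * q t ^ (1 - α)) := by
        apply max_le
        · exact mul_nonneg hK0.le (mul_nonneg (Real.rpow_nonneg (hp0 t) _)
            (Real.rpow_nonneg (hq0 t) _))
        · exact hkey
      calc ENNReal.ofReal (f t) ≤ ENNReal.ofReal (K * (p t ^ α * q t ^ (1 - α))) :=
            ENNReal.ofReal_le_ofReal hfb
        _ = ENNReal.ofReal K * (ENNReal.ofReal (p t) ^ α * ENNReal.ofReal (q t) ^ (1 - α)) := by
            rw [ENNReal.ofReal_mul hK0.le, ENNReal.ofReal_mul (Real.rpow_nonneg (hp0 t) _),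
              ENNReal.ofReal_rpow_of_nonneg (hp0 t) hα0.le,
              ENNReal.ofReal_rpow_of_pos hqt]
    · -- q t = 0
      rcases lt_or_eq_of_le (hp0 t) with hpt' | hpt'
      · -- p t > 0 : RHS = ∞
        have h1 : ENNReal.ofReal (q t) ^ (1 - α) = ⊤ := by
          rw [← hqt, ENNReal.ofReal_zero]
          exact ENNReal.zero_rpow_of_neg (by linarith)
        have h2 : ENNReal.ofReal (p t) ^ α ≠ 0 := by
          simp [ENNReal.rpow_eq_zero_iff, hpt', hpt'.le, hα0, not_lt.mpr hα0.le]
        rw [h1, ENNReal.mul_top h2, ENNReal.mul_top (by simp [hK0])]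
        exact le_top
      · -- p t = 0
        have : f t = 0 := by simp [hf_def, ← hpt', ← hqt]
        simp [this]
    -- integrate
  have hgm : Measurable fun t => ENNReal.ofReal (p t) ^ α * ENNReal.ofReal (q t) ^ (1 - α) :=
    (hp.ennreal_ofReal.pow_const α).mul (hq.ennreal_ofReal.pow_const (1 - α))
  have hlin : ∫⁻ t, ENNReal.ofReal (f t) ∂ν ≤ ENNReal.ofReal K * ENNReal.ofReal E := by
    calc ∫⁻ t, ENNReal.ofReal (f t) ∂ν
        ≤ ∫⁻ t, ENNReal.ofReal K *
            (ENNReal.ofReal (p t) ^ α * ENNReal.ofReal (q t) ^ (1 - α)) ∂ν :=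
          lintegral_mono hpt
      _ = ENNReal.ofReal K *
            ∫⁻ t, ENNReal.ofReal (p t) ^ α * ENNReal.ofReal (q t) ^ (1 - α) ∂ν :=
          lintegral_const_mul _ hgm
      _ ≤ ENNReal.ofReal K * ENNReal.ofReal E :=
          mul_le_mul_right hren _
  have hint : ∫ t, f t ∂ν = (∫⁻ t, ENNReal.ofReal (f t) ∂ν).toReal :=
    integral_eq_lintegral_of_nonneg_ae (Filter.Eventually.of_forall hf0)
      hfm.aestronglyMeasurable
  have hfin : ENNReal.ofReal K * ENNReal.ofReal E ≠ ⊤ :=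
    ENNReal.mul_ne_top ENNReal.ofReal_ne_top ENNReal.ofReal_ne_top
  have hbound : ∫ t, f t ∂ν ≤ K * E := by
    rw [hint]
    calc (∫⁻ t, ENNReal.ofReal (f t) ∂ν).toReal
        ≤ (ENNReal.ofReal K * ENNReal.ofReal E).toReal := ENNReal.toReal_mono hfin hlin
      _ = K * E := by
          rw [ENNReal.toReal_mul, ENNReal.toReal_ofReal hK0.le, ENNReal.toReal_ofReal hE0.le]
  -- identify constants
  have h1a : (0:ℝ) ≤ 1 - 1 / α := by
    have : 1 / α ≤ 1 := by rw [div_le_one hα0]; exact hα.le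
    linarith
  have hconst : K * E = Real.exp ((α - 1) * (ε' - ε)) / α * (1 - 1 / α) ^ (α - 1) := by
    have h1 : (α - 1) / (α * β) = (1 - 1 / α) * Real.exp (-ε) := by
      rw [Real.exp_neg, ← hβ_def]
      field_simp
    have h2 : ((α - 1) / (α * β)) ^ (α - 1) =
        (1 - 1 / α) ^ (α - 1) * Real.exp (-(ε * (α - 1))) := by
      rw [h1, Real.mul_rpow h1a (Real.exp_pos _).le, ← Real.exp_mul]
      ring_nf
    rw [hK_def, hE_def, h2,
      show (α - 1) * (ε' - ε) = (α - 1) * ε' + -(ε * (α - 1)) by ring, Real.exp_add]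
    ring
  rw [← hconst]
  exact hbound
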